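/- Convergence of simple random walks: let T ≥ 1 and let s₁, s₂ : ℤ with s₁ - s₂ = 2k for a natural number k ≥ 1. Then TV(rwalk(T, s₁), rwalk(T, s₂)) ≤ (k · e · √2) / (π · √T). -/

import Mathlib

open scoped ENNReal

/-- Total variation distance between two PMFs. -/
noncomputable def TV {A : Type*} (μ₁ μ₂ : PMF A) : ℝ :=
  (1 / 2) * ∑' a, |(μ₁ a).toReal - (μ₂ a).toReal|

/-- `iter f t s` is the `t`-fold monadic iterate of `f` starting from the point mass at `s`. -/
noncomputable def iter {Ω : Type*} (f : Ω → PMF Ω) : ℕ → Ω → PMF Ω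
  | 0, s => PMF.pure s
  | t + 1, s => (iter f t s).bind f

/-- One step of the simple symmetric random walk: from `x`, move to `x - 1` or `x + 1`
uniformly at random. -/
noncomputable def rwStep (x : ℤ) : PMF ℤ :=
  (PMF.uniformOfFintype Bool).map fun b => if b then x + 1 else x - 1

/-- The distribution of the simple symmetric random walk after `T` steps from `s`. -/
noncomputable def rwalk (T : ℕ) (s : ℤ) : PMF ℤ := iter rwStep T s

open PMF

noncomputable def eTV {A : Type*} (μ₁ μ₂ : PMF A) : ℝ≥0∞ :=
  ∑' a, ((μ₁ a - μ₂ a) + (μ₂ a - μ₁ a))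

lemma eTV_le_two {A : Type*} (μ₁ μ₂ : PMF A) : eTV μ₁ μ₂ ≤ 2 := by
  calc eTV μ₁ μ₂ ≤ ∑' a, (μ₁ a + μ₂ a) :=
        ENNReal.tsum_le_tsum fun a => add_le_add tsub_le_self tsub_le_self
    _ = 1 + 1 := by rw [ENNReal.tsum_add, μ₁.tsum_coe, μ₂.tsum_coe]
    _ = 2 := by norm_num

lemma eTV_ne_top {A : Type*} (μ₁ μ₂ : PMF A) : eTV μ₁ μ₂ ≠ ∞ :=
  ne_top_of_le_ne_top (by norm_num) (eTV_le_two μ₁ μ₂)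

lemma TV_eq {A : Type*} (μ₁ μ₂ : PMF A) : TV μ₁ μ₂ = (1/2) * (eTV μ₁ μ₂).toReal := by
  unfold TV eTV
  congr 1
  rw [ENNReal.tsum_toReal_eq fun a => by
    exact ENNReal.add_ne_top.2 ⟨ne_top_of_le_ne_top (μ₁.apply_ne_top a) tsub_le_self,
      ne_top_of_le_ne_top (μ₂.apply_ne_top a) tsub_le_self⟩]
  refine tsum_congr fun a => ?_
  rcases le_total (μ₁ a) (μ₂ a) with h | h
  · rw [tsub_eq_zero_of_le h, zero_add, ENNReal.toReal_sub_of_le h (μ₂.apply_ne_top a),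
      abs_of_nonpos (by linarith [ENNReal.toReal_mono (μ₂.apply_ne_top a) h])]
    ring
  · rw [tsub_eq_zero_of_le h, add_zero, ENNReal.toReal_sub_of_le h (μ₁.apply_ne_top a),
      abs_of_nonneg (by linarith [ENNReal.toReal_mono (μ₁.apply_ne_top a) h])]

lemma eTV_self {A : Type*} (μ : PMF A) : eTV μ μ = 0 := by
  simp [eTV]

lemma eTV_triangle {A : Type*} (μ₁ μ₂ μ₃ : PMF A) :
    eTV μ₁ μ₃ ≤ eTV μ₁ μ₂ + eTV μ₂ μ₃ := by
  rw [eTV, eTV, eTV, ← ENNReal.tsum_add]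
  refine ENNReal.tsum_le_tsum fun a => ?_
  have h1 : μ₁ a - μ₃ a ≤ (μ₁ a - μ₂ a) + (μ₂ a - μ₃ a) := tsub_le_tsub_add_tsub
  have h2 : μ₃ a - μ₁ a ≤ (μ₃ a - μ₂ a) + (μ₂ a - μ₁ a) := tsub_le_tsub_add_tsub
  calc (μ₁ a - μ₃ a) + (μ₃ a - μ₁ a)
      ≤ ((μ₁ a - μ₂ a) + (μ₂ a - μ₃ a)) + ((μ₃ a - μ₂ a) + (μ₂ a - μ₁ a)) := add_le_add h1 h2
    _ = ((μ₁ a - μ₂ a) + (μ₂ a - μ₁ a)) + ((μ₂ a - μ₃ a) + (μ₃ a - μ₂ a)) := by ring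

lemma eTV_bind_le {A B : Type*} (μ₁ μ₂ : PMF A) (f : A → PMF B) :
    eTV (μ₁.bind f) (μ₂.bind f) ≤ eTV μ₁ μ₂ := by
  have key : ∀ (ν₁ ν₂ : PMF A) (b : B),
      ν₁.bind f b - ν₂.bind f b ≤ ∑' a, (ν₁ a - ν₂ a) * f a b := by
    intro ν₁ ν₂ b
    rw [tsub_le_iff_right]
    rw [PMF.bind_apply, PMF.bind_apply, ← ENNReal.tsum_add]
    refine ENNReal.tsum_le_tsum fun a => ?_
    rw [← add_mul]
    exact mul_le_mul_left (le_tsub_add) _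
  calc eTV (μ₁.bind f) (μ₂.bind f)
      ≤ ∑' b, ((∑' a, (μ₁ a - μ₂ a) * f a b) + ∑' a, (μ₂ a - μ₁ a) * f a b) :=
        ENNReal.tsum_le_tsum fun b => add_le_add (key μ₁ μ₂ b) (key μ₂ μ₁ b)
    _ = ∑' b, ∑' a, ((μ₁ a - μ₂ a) + (μ₂ a - μ₁ a)) * f a b := by
        refine tsum_congr fun b => ?_
        rw [← ENNReal.tsum_add]
        exact tsum_congr fun a => (add_mul _ _ _).symm
    _ = ∑' a, ∑' b, ((μ₁ a - μ₂ a) + (μ₂ a - μ₁ a)) * f a b := ENNReal.tsum_comm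
    _ = ∑' a, ((μ₁ a - μ₂ a) + (μ₂ a - μ₁ a)) := by
        refine tsum_congr fun a => ?_
        rw [ENNReal.tsum_mul_left, (f a).tsum_coe, mul_one]


lemma rwalk_zero (s : ℤ) : rwalk 0 s = PMF.pure s := rfl
lemma rwalk_succ (T : ℕ) (s : ℤ) : rwalk (T+1) s = (rwalk T s).bind rwStep := rfl

lemma rwStep_add (x c : ℤ) : rwStep (x + c) = (rwStep x).map (· + c) := by
  unfold rwStep
  rw [PMF.map_comp]
  congr 1
  funext b
  cases b <;> simp <;> ring

lemma rwalk_add (T : ℕ) (s c : ℤ) : rwalk T (s + c) = (rwalk T s).map (· + c) := by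
  induction T with
  | zero => rw [rwalk_zero, rwalk_zero, PMF.pure_map]
  | succ T ih =>
      rw [rwalk_succ, rwalk_succ, ih, PMF.bind_map, PMF.map_bind]
      congr 1
      funext x
      show rwStep (x + c) = _
      exact rwStep_add x c

lemma rwStep_apply (y x : ℤ) :
    rwStep y x = (if x = y + 1 then 2⁻¹ else 0) + (if x = y - 1 then 2⁻¹ else 0) := by
  unfold rwStep
  rw [PMF.map_apply, tsum_bool]
  simp [PMF.uniformOfFintype_apply, add_comm]

lemma rwalk_succ_apply (T : ℕ) (s x : ℤ) :
    rwalk (T+1) s x = 2⁻¹ * (rwalk T s (x-1) + rwalk T s (x+1)) := by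
  rw [rwalk_succ, PMF.bind_apply]
  have : ∀ y : ℤ, rwalk T s y * rwStep y x =
      (if y = x - 1 then rwalk T s (x-1) * 2⁻¹ else 0) +
      (if y = x + 1 then rwalk T s (x+1) * 2⁻¹ else 0) := by
    intro y
    rw [rwStep_apply, mul_add]
    congr 1
    · by_cases h : y = x - 1
      · subst h; rw [if_pos (by ring), if_pos rfl]
      · rw [if_neg (fun hc => h (by omega)), if_neg h, mul_zero]
    · by_cases h : y = x + 1
      · subst h; rw [if_pos (by ring), if_pos rfl]
      · rw [if_neg (fun hc => h (by omega)), if_neg h, mul_zero]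
  rw [tsum_congr this, ENNReal.tsum_add, tsum_eq_single (x-1) (fun b hb => if_neg hb),
    tsum_eq_single (x+1) (fun b hb => if_neg hb), if_pos rfl, if_pos rfl]
  ring

lemma rwalk_support (T : ℕ) (s : ℤ) : ∀ x : ℤ, rwalk T s x ≠ 0 → ∃ j ≤ T, x = s - T + 2*j := by
  induction T with
  | zero =>
      intro x hx
      rw [rwalk_zero, PMF.pure_apply] at hx
      exact ⟨0, le_refl _, by by_contra h; exact hx (if_neg (by push_cast; omega))⟩
  | succ T ih =>
      intro x hx
      rw [rwalk_succ_apply] at hx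
      have h2 : rwalk T s (x-1) ≠ 0 ∨ rwalk T s (x+1) ≠ 0 := by
        by_contra h; push_neg at h
        rw [h.1, h.2, add_zero, mul_zero] at hx; exact hx rfl
      rcases h2 with h | h
      · obtain ⟨j, hj, hxe⟩ := ih _ h
        exact ⟨j+1, by omega, by push_cast; push_cast at hxe; omega⟩
      · obtain ⟨j, hj, hxe⟩ := ih _ h
        exact ⟨j, by omega, by push_cast; push_cast at hxe; omega⟩

lemma rwalk_zero_of_not (T : ℕ) (s x : ℤ) (h : ∀ j : ℕ, j ≤ T → x ≠ s - T + 2*j) :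
    rwalk T s x = 0 := by
  by_contra hx
  obtain ⟨j, hj, hxe⟩ := rwalk_support T s x hx
  exact h j hj hxe

lemma rwalk_apply (T : ℕ) (s : ℤ) (j : ℕ) :
    rwalk T s (s - T + 2*j) = (T.choose j : ℝ≥0∞) * ((2:ℝ≥0∞)^T)⁻¹ := by
  induction T generalizing j with
  | zero =>
      rw [rwalk_zero, PMF.pure_apply]
      rcases Nat.eq_zero_or_pos j with h | h
      · subst h; simp
      · rw [if_neg (by push_cast; omega), Nat.choose_eq_zero_of_lt (by omega)]
        simp
  | succ T ih =>
      rw [rwalk_succ_apply]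
      have hpow : ((2:ℝ≥0∞)^(T+1))⁻¹ = 2⁻¹ * ((2:ℝ≥0∞)^T)⁻¹ := by
        rw [pow_succ, ENNReal.mul_inv (by norm_num) (by norm_num), mul_comm]
      rcases Nat.eq_zero_or_pos j with h | h
      · subst h
        have h1 : rwalk T s (s - ((T+1:ℕ):ℤ) + 2*((0:ℕ):ℤ) - 1) = 0 := by
          refine rwalk_zero_of_not T s _ fun j' hj' => ?_
          push_cast; omega
        have h2 : (s - ((T+1:ℕ):ℤ) + 2*((0:ℕ):ℤ) + 1 : ℤ) = s - T + 2*((0:ℕ):ℤ) := by push_cast; ring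
        rw [h1, h2, ih 0, zero_add, hpow]
        simp [Nat.choose]
      · obtain ⟨m, rfl⟩ := Nat.exists_eq_add_of_lt h
        rw [zero_add]
        have h1 : (s - ((T+1:ℕ):ℤ) + 2*((m+1:ℕ):ℤ) - 1 : ℤ) = s - T + 2*((m:ℕ):ℤ) := by push_cast; ring
        have h2 : (s - ((T+1:ℕ):ℤ) + 2*((m+1:ℕ):ℤ) + 1 : ℤ) = s - T + 2*((m+1:ℕ):ℤ) := by push_cast; ring
        rw [h1, h2, ih m, ih (m+1), hpow, Nat.choose_succ_succ]
        push_cast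
        ring


lemma choose_up (T j : ℕ) (h : j < T/2) : T.choose j ≤ T.choose (j+1) := by
  have key := Nat.choose_succ_right_eq T j
  have h1 : j + 1 ≤ T - j := by omega
  have h2 : T.choose j * (j+1) ≤ T.choose (j+1) * (j+1) := by
    calc T.choose j * (j+1) ≤ T.choose j * (T - j) := Nat.mul_le_mul_left _ h1
      _ = T.choose (j+1) * (j+1) := key.symm
  exact Nat.le_of_mul_le_mul_right h2 (by omega)

lemma choose_down (T j : ℕ) (h : T/2 ≤ j) : T.choose (j+1) ≤ T.choose j := by
  have key := Nat.choose_succ_right_eq T j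
  have h1 : T - j ≤ j + 1 := by omega
  have h2 : T.choose (j+1) * (j+1) ≤ T.choose j * (j+1) := by
    calc T.choose (j+1) * (j+1) = T.choose j * (T - j) := key
      _ ≤ T.choose j * (j+1) := Nat.mul_le_mul_left _ h1
  exact Nat.le_of_mul_le_mul_right h2 (by omega)

lemma teleA (f : ℕ → ℕ) (m : ℕ) (h : ∀ j < m, f j ≤ f (j+1)) :
    f 0 ≤ f m ∧
      ∑ j ∈ Finset.range m, ((f j - f (j+1)) + (f (j+1) - f j)) = f m - f 0 := by
  induction m with
  | zero => simp
  | succ m ih =>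
      obtain ⟨h0, hsum⟩ := ih (fun j hj => h j (by omega))
      have hm : f m ≤ f (m+1) := h m (by omega)
      constructor
      · omega
      · rw [Finset.sum_range_succ, hsum]
        omega

lemma teleB (f : ℕ → ℕ) (m : ℕ) : ∀ p : ℕ, (∀ j, m ≤ j → j < m + p → f (j+1) ≤ f j) →
    f (m+p) ≤ f m ∧
      ∑ j ∈ Finset.Ico m (m+p), ((f j - f (j+1)) + (f (j+1) - f j)) = f m - f (m+p) := by
  intro p
  induction p with
  | zero => simp
  | succ p ih =>
      intro h
      obtain ⟨h0, hsum⟩ := ih (fun j hj hj' => h j hj (by omega))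
      have hm : f (m+p+1) ≤ f (m+p) := h (m+p) (by omega) (by omega)
      have hE : f (m+(p+1)) = f (m+p+1) := by rw [Nat.add_succ]
      constructor
      · omega
      · rw [show m + (p+1) = (m+p) + 1 by omega, Finset.sum_Ico_succ_top (by omega), hsum]
        omega

lemma nat_key (T : ℕ) :
    T.choose 0 + ∑ j ∈ Finset.range (T+1),
      ((T.choose j - T.choose (j+1)) + (T.choose (j+1) - T.choose j)) =
    2 * T.choose (T/2) := by
  set m := T/2 with hm
  have hmle : m ≤ T + 1 := by omega
  have hsplit : Finset.range (T+1) = Finset.Ico 0 m ∪ Finset.Ico m (T+1) := by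
    rw [Finset.range_eq_Ico, ← Finset.Ico_union_Ico_eq_Ico (by omega) hmle]
  obtain ⟨hA0, hA⟩ := teleA (T.choose) m (fun j hj => choose_up T j (by omega))
  obtain ⟨hB0, hB⟩ := teleB (T.choose) m (T+1-m) (fun j hj hj' => choose_down T j (by omega))
  have hmm : m + (T+1-m) = T+1 := by omega
  rw [hsplit, Finset.sum_union (by
    refine Finset.disjoint_left.2 fun a ha hb => ?_
    simp only [Finset.mem_Ico] at ha hb
    omega)]
  rw [← Finset.range_eq_Ico, hA]
  rw [hmm] at hB
  rw [hB]
  have hc0 : T.choose 0 = 1 := Nat.choose_zero_right T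
  have hcT : T.choose (T+1) = 0 := Nat.choose_eq_zero_of_lt (by omega)
  have hpos : 1 ≤ T.choose m := Nat.choose_pos (by omega)
  omega

lemma cb_sq (n : ℕ) : Nat.centralBinom n ^ 2 * (2*n+1) ≤ 16^n := by
  induction n with
  | zero => simp [Nat.centralBinom]
  | succ n ih =>
      have key := Nat.succ_mul_centralBinom_succ n
      have h1 : (n+1)^2 * ((Nat.centralBinom (n+1))^2 * (2*(n+1)+1))
          ≤ (n+1)^2 * 16^(n+1) := by
        have e1 : (n+1)^2 * (Nat.centralBinom (n+1))^2 = (2*(2*n+1))^2 * (Nat.centralBinom n)^2 := by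
          calc (n+1)^2 * (Nat.centralBinom (n+1))^2 = ((n+1) * Nat.centralBinom (n+1))^2 :=
                (mul_pow _ _ 2).symm
            _ = (2*(2*n+1) * Nat.centralBinom n)^2 := by rw [key]
            _ = (2*(2*n+1))^2 * (Nat.centralBinom n)^2 := mul_pow _ _ 2
        calc (n+1)^2 * ((Nat.centralBinom (n+1))^2 * (2*(n+1)+1))
            = ((n+1)^2 * (Nat.centralBinom (n+1))^2) * (2*(n+1)+1) := by ring
          _ = (2*(2*n+1))^2 * (Nat.centralBinom n)^2 * (2*(n+1)+1) := by rw [e1]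
          _ = 4*(2*n+1)*(2*n+3) * ((Nat.centralBinom n)^2 * (2*n+1)) := by ring
          _ ≤ 4*(2*n+1)*(2*n+3) * 16^n := Nat.mul_le_mul_left _ ih
          _ ≤ 4*(2*n+2)^2 * 16^n := Nat.mul_le_mul_right _ (by nlinarith)
          _ = (n+1)^2 * 16^(n+1) := by ring
      exact Nat.le_of_mul_le_mul_left h1 (pow_pos (Nat.succ_pos n) 2)

lemma cb_real (n : ℕ) :
    (Nat.centralBinom n : ℝ) ≤ 4^n / Real.sqrt (2*n+1) := by
  have hsq : ((Nat.centralBinom n : ℝ))^2 * (2*n+1) ≤ (4^n)^2 := by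
    have h := cb_sq n
    have h' : ((Nat.centralBinom n ^ 2 * (2*n+1) : ℕ) : ℝ) ≤ ((16^n : ℕ) : ℝ) := by exact_mod_cast h
    push_cast at h'
    calc (Nat.centralBinom n : ℝ)^2 * (2*n+1) ≤ 16^n := h'
      _ = (4^n)^2 := by rw [← pow_mul, mul_comm n 2, pow_mul]; norm_num
  have hspos : (0:ℝ) < Real.sqrt (2*n+1) := Real.sqrt_pos.2 (by positivity)
  rw [le_div_iff₀ hspos]
  have h1 : ((Nat.centralBinom n : ℝ) * Real.sqrt (2*n+1))^2 ≤ ((4:ℝ)^n)^2 := by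
    rw [mul_pow, Real.sq_sqrt (by positivity : (0:ℝ) ≤ 2*n+1)]
    exact hsq
  have h2 := Real.sqrt_le_sqrt h1
  rwa [Real.sqrt_sq (by positivity), Real.sqrt_sq (by positivity)] at h2

lemma choose_half_le (T : ℕ) (hT : 1 ≤ T) :
    (T.choose (T/2) : ℝ) ≤ 2^T / Real.sqrt T := by
  have hTpos : (0:ℝ) < Real.sqrt T := Real.sqrt_pos.2 (by exact_mod_cast Nat.cast_pos.2 (by omega))
  rcases Nat.even_or_odd T with ⟨n, hn⟩ | ⟨n, hn⟩
  · have hn1 : 1 ≤ n := by omega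
    have hhalf : T/2 = n := by omega
    have hcb : T.choose (T/2) = Nat.centralBinom n := by
      rw [hhalf, Nat.centralBinom_eq_two_mul_choose]; congr 1; omega
    have h4 : (4:ℝ)^n = 2^T := by
      rw [show (4:ℝ) = 2^2 by norm_num, ← pow_mul]; congr 1; omega
    have hsq : Real.sqrt T ≤ Real.sqrt (2*n+1) := Real.sqrt_le_sqrt (by rw [hn]; push_cast; linarith)
    calc (T.choose (T/2):ℝ) = Nat.centralBinom n := by rw [hcb]
      _ ≤ 4^n / Real.sqrt (2*n+1) := cb_real n
      _ ≤ 4^n / Real.sqrt T := by gcongr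
      _ = 2^T / Real.sqrt T := by rw [h4]
  · have hhalf : T/2 = n := by omega
    have hch : T.choose n ≤ 2 * Nat.centralBinom n := by
      rcases Nat.eq_zero_or_pos n with h0 | h0
      · subst h0; simp [hn]
      · obtain ⟨m, rfl⟩ : ∃ m, n = m + 1 := ⟨n-1, by omega⟩
        have hpascal : T.choose (m+1) = (2*(m+1)).choose m + (2*(m+1)).choose (m+1) := by
          rw [show T = 2*(m+1) + 1 by omega]
          exact Nat.choose_succ_succ' (2*(m+1)) m
        have hle : (2*(m+1)).choose m ≤ (2*(m+1)).choose (m+1) := by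
          have h := Nat.choose_le_middle m (2*(m+1))
          rwa [show (2*(m+1))/2 = m+1 by omega] at h
        rw [Nat.centralBinom_eq_two_mul_choose]
        omega
    have hs : Real.sqrt (T:ℝ) = Real.sqrt (2*n+1) := by
      congr 1; push_cast [hn]; ring
    have h2T : (2:ℝ)^T = 2 * 4^n := by
      rw [hn, pow_succ, show (4:ℝ) = 2^2 by norm_num, ← pow_mul]
      ring
    calc (T.choose (T/2):ℝ) ≤ 2 * (Nat.centralBinom n : ℝ) := by
          rw [hhalf]; exact_mod_cast hch
      _ ≤ 2 * (4^n / Real.sqrt (2*n+1)) := by have := cb_real n; linarith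
      _ = 2^T / Real.sqrt T := by rw [hs, h2T]; ring
lemma rwalk_shift_apply (T : ℕ) (s x : ℤ) : rwalk T (s+2) x = rwalk T s (x - 2) := by
  rw [rwalk_add, PMF.map_apply]
  exact (tsum_eq_single (x-2) fun b hb => if_neg fun hc => hb (by omega)).trans
    (by rw [if_pos (by ring)])

lemma eTV_rwalk_two (T : ℕ) (s : ℤ) :
    eTV (rwalk T (s+2)) (rwalk T s) = ((2 * T.choose (T/2) : ℕ) : ℝ≥0∞) * ((2:ℝ≥0∞)^T)⁻¹ := by
  set r : ℝ≥0∞ := ((2:ℝ≥0∞)^T)⁻¹ with hr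
  have hrtop : r ≠ ∞ := by
    rw [hr]
    exact ENNReal.inv_ne_top.2 (by positivity)
  have hsub : ∀ a b : ℕ, ((a:ℝ≥0∞) * r - (b:ℝ≥0∞) * r) + ((b:ℝ≥0∞) * r - (a:ℝ≥0∞) * r)
      = (((a - b) + (b - a) : ℕ) : ℝ≥0∞) * r := by
    intro a b
    push_cast [ENNReal.natCast_sub]
    rw [add_mul, ENNReal.sub_mul (fun _ _ => hrtop), ENNReal.sub_mul (fun _ _ => hrtop)]
  have hF : ∀ x, (rwalk T (s+2) x - rwalk T s x) + (rwalk T s x - rwalk T (s+2) x)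
      = (rwalk T s (x-2) - rwalk T s x) + (rwalk T s x - rwalk T s (x-2)) := by
    intro x; rw [rwalk_shift_apply]
  rw [eTV, tsum_congr hF]
  set S : Finset ℤ := (Finset.range (T+2)).image (fun j : ℕ => s - T + 2*(j:ℤ)) with hS
  have hout : ∀ x ∉ S, (rwalk T s (x-2) - rwalk T s x) + (rwalk T s x - rwalk T s (x-2)) = 0 := by
    intro x hx
    have h1 : rwalk T s x = 0 := by
      refine rwalk_zero_of_not T s x fun j hj hxe => hx ?_
      refine Finset.mem_image.2 ⟨j, Finset.mem_range.2 ?_, ?_⟩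
      · omega
      · omega
    have h2 : rwalk T s (x-2) = 0 := by
      refine rwalk_zero_of_not T s (x-2) fun j hj hxe => hx ?_
      refine Finset.mem_image.2 ⟨j+1, Finset.mem_range.2 ?_, ?_⟩
      · omega
      · push_cast; omega
    rw [h1, h2]; simp
  rw [tsum_eq_sum hout, Finset.sum_image (by intro a _ b _ h; have h' : s - T + 2*(a:ℤ) = s - T + 2*(b:ℤ) := h; omega)]
  rw [Finset.sum_range_succ']
  have hterm : ∀ i : ℕ,
      (rwalk T s (s - T + 2*((i+1:ℕ):ℤ) - 2) - rwalk T s (s - T + 2*((i+1:ℕ):ℤ)))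
      + (rwalk T s (s - T + 2*((i+1:ℕ):ℤ)) - rwalk T s (s - T + 2*((i+1:ℕ):ℤ) - 2))
      = (((T.choose i - T.choose (i+1)) + (T.choose (i+1) - T.choose i) : ℕ) : ℝ≥0∞) * r := by
    intro i
    rw [show (s - (T:ℤ) + 2*((i+1:ℕ):ℤ) - 2) = s - (T:ℤ) + 2*((i:ℕ):ℤ) by push_cast; ring]
    rw [rwalk_apply, rwalk_apply, hsub]
  have hterm0 :
      (rwalk T s (s - T + 2*((0:ℕ):ℤ) - 2) - rwalk T s (s - T + 2*((0:ℕ):ℤ)))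
      + (rwalk T s (s - T + 2*((0:ℕ):ℤ)) - rwalk T s (s - T + 2*((0:ℕ):ℤ) - 2))
      = (T.choose 0 : ℝ≥0∞) * r := by
    have hz : rwalk T s (s - T + 2*((0:ℕ):ℤ) - 2) = 0 :=
      rwalk_zero_of_not _ _ _ (fun j hj => by push_cast; omega)
    rw [hz, rwalk_apply, zero_tsub, tsub_zero, zero_add, hr]
  rw [Finset.sum_congr rfl (fun i _ => hterm i), hterm0, ← Finset.sum_mul, ← Nat.cast_sum,
    ← add_mul, ← Nat.cast_add, add_comm _ (T.choose 0), nat_key]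

lemma eTV_chain (T : ℕ) (s : ℤ) (i : ℕ) :
    eTV (rwalk T (s + 2*(i:ℤ))) (rwalk T s) ≤ (i:ℝ≥0∞) * eTV (rwalk T (s+2)) (rwalk T s) := by
  induction i with
  | zero => simp [eTV_self]
  | succ i ih =>
      have hmap1 : rwalk T (s + 2*((i+1:ℕ):ℤ)) = (rwalk T (s+2)).map (· + 2*(i:ℤ)) := by
        rw [← rwalk_add]; congr 1; push_cast; ring
      have hmap2 : rwalk T (s + 2*(i:ℤ)) = (rwalk T s).map (· + 2*(i:ℤ)) := rwalk_add T s _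
      have hstep : eTV (rwalk T (s + 2*((i+1:ℕ):ℤ))) (rwalk T (s + 2*(i:ℤ)))
          ≤ eTV (rwalk T (s+2)) (rwalk T s) := by
        rw [hmap1, hmap2]
        exact eTV_bind_le _ _ _
      calc eTV (rwalk T (s + 2*((i+1:ℕ):ℤ))) (rwalk T s)
          ≤ eTV (rwalk T (s + 2*((i+1:ℕ):ℤ))) (rwalk T (s + 2*(i:ℤ)))
            + eTV (rwalk T (s + 2*(i:ℤ))) (rwalk T s) := eTV_triangle _ _ _
        _ ≤ eTV (rwalk T (s+2)) (rwalk T s) + i * eTV (rwalk T (s+2)) (rwalk T s) :=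
            add_le_add hstep ih
        _ = ((i+1:ℕ):ℝ≥0∞) * eTV (rwalk T (s+2)) (rwalk T s) := by push_cast; ring

/-- Convergence of simple random walks started an even distance `2k` apart. -/
theorem rwalk_converge (T : ℕ) (hT : 1 ≤ T) (s₁ s₂ : ℤ) (k : ℕ) (hk : 1 ≤ k)
    (hs : s₁ - s₂ = 2 * (k : ℤ)) :
    TV (rwalk T s₁) (rwalk T s₂) ≤
      (k : ℝ) * Real.exp 1 * Real.sqrt 2 / (Real.pi * Real.sqrt T) := by
  have hs2 : s₁ = s₂ + 2*(k:ℤ) := by omega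
  set C := T.choose (T/2) with hC
  have hfin : (k:ℝ≥0∞) * (((2*C:ℕ):ℝ≥0∞) * ((2:ℝ≥0∞)^T)⁻¹) ≠ ∞ :=
    ENNReal.mul_ne_top (ENNReal.natCast_ne_top _)
      (ENNReal.mul_ne_top (ENNReal.natCast_ne_top _) (ENNReal.inv_ne_top.2 (by positivity)))
  have h1 : eTV (rwalk T s₁) (rwalk T s₂) ≤ (k:ℝ≥0∞) * (((2*C:ℕ):ℝ≥0∞) * ((2:ℝ≥0∞)^T)⁻¹) := by
    rw [hs2, ← eTV_rwalk_two T s₂]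
    exact eTV_chain T s₂ k
  have htoReal : ((k:ℝ≥0∞) * (((2*C:ℕ):ℝ≥0∞) * ((2:ℝ≥0∞)^T)⁻¹)).toReal
      = (k:ℝ) * ((2*C:ℕ) / 2^T) := by
    rw [ENNReal.toReal_mul, ENNReal.toReal_mul, ENNReal.toReal_inv, ENNReal.toReal_pow]
    simp [div_eq_mul_inv]
  have hTV : TV (rwalk T s₁) (rwalk T s₂) ≤ (1/2) * ((k:ℝ) * ((2*C:ℕ) / 2^T)) := by
    rw [TV_eq, ← htoReal]
    have := ENNReal.toReal_mono hfin h1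
    linarith
  have hTpos : (0:ℝ) < (T:ℝ) := by exact_mod_cast Nat.pos_of_ne_zero (by omega)
  have hsqT : (0:ℝ) < Real.sqrt T := Real.sqrt_pos.2 hTpos
  have hchoose := choose_half_le T hT
  have hone : 1 ≤ Real.exp 1 * Real.sqrt 2 / Real.pi := by
    rw [le_div_iff₀ Real.pi_pos]
    have he : (2.7182818283:ℝ) < Real.exp 1 := Real.exp_one_gt_d9
    have hsq2 : (1.4:ℝ) ≤ Real.sqrt 2 := by
      nlinarith [Real.sq_sqrt (show (0:ℝ) ≤ 2 by norm_num), Real.sqrt_nonneg 2]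
    have hpi' : Real.pi < 3.15 := Real.pi_lt_d2
    nlinarith [Real.sqrt_nonneg 2]
  calc TV (rwalk T s₁) (rwalk T s₂) ≤ (1/2) * ((k:ℝ) * ((2*C:ℕ) / 2^T)) := hTV
    _ = (k:ℝ) * ((C:ℝ) / 2^T) := by push_cast; ring
    _ ≤ (k:ℝ) * ((2^T / Real.sqrt T) / 2^T) := by gcongr
    _ = (k:ℝ) * (1 / Real.sqrt T) := by
        congr 1
        field_simp
    _ ≤ ((k:ℝ) * (1 / Real.sqrt T)) * (Real.exp 1 * Real.sqrt 2 / Real.pi) :=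
        le_mul_of_one_le_right (by positivity) hone
    _ = (k : ℝ) * Real.exp 1 * Real.sqrt 2 / (Real.pi * Real.sqrt T) := by
        field_simp
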